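/- The centralizer of the element c = [a₁,b₁]⋯[a_g,b_g] in the free group F_{2g} (g ≥ 1) is the cyclic subgroup generated by c. -/

import Mathlib

open FreeGroup
section GenericWords

variable {α : Type*} [DecidableEq α]

/-- A word is reduced: no adjacent cancelling pair. -/
def RedWord (L : List (α × Bool)) : Prop :=
  List.Chain' (fun a b => ¬(a.1 = b.1 ∧ a.2 = !b.2)) L

theorem RedWord.reduce_eq {L : List (α × Bool)} (h : RedWord L) : FreeGroup.reduce L = L := by
  induction L with
  | nil => rfl
  | cons x t ih =>
    have ht : RedWord t := h.tail
    rw [FreeGroup.reduce.cons, ih ht]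
    cases t with
    | nil => rfl
    | cons hd tl =>
      have : ¬(x.1 = hd.1 ∧ x.2 = !hd.2) := (List.isChain_cons_cons.1 h).1
      simp [this]

theorem redWord_of_reduce_eq {L : List (α × Bool)} (h : FreeGroup.reduce L = L) : RedWord L := by
  induction L with
  | nil => exact List.isChain_nil
  | cons x t ih =>
    rw [FreeGroup.reduce.cons] at h
    cases hr : FreeGroup.reduce t with
    | nil =>
      rw [hr] at h
      simp only [] at h
      have : t = [] := by
        have := congrArg List.length h
        simpa using this.symm
      subst this
      exact List.isChain_singleton x
    | cons hd tl =>
      rw [hr] at h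
      dsimp only at h
      by_cases hc : x.1 = hd.1 ∧ x.2 = !hd.2
      · rw [if_pos hc] at h
        exfalso
        have h1 : (FreeGroup.reduce t).length ≤ t.length :=
          FreeGroup.Red.length_le (FreeGroup.reduce.red)
        rw [hr] at h1
        have h2 := congrArg List.length h
        simp only [List.length_cons] at h1 h2
        omega
      · rw [if_neg hc] at h
        have htl : t = hd :: tl := by
          have := congrArg List.tail h
          simpa using this.symm
        have hrt : RedWord t := ih (by rw [hr, htl])
        rw [htl] at hrt ⊢
        exact List.isChain_cons_cons.2 ⟨hc, hrt⟩

theorem redWord_toWord (x : FreeGroup α) : RedWord x.toWord :=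
  redWord_of_reduce_eq (FreeGroup.reduce_toWord x)

theorem RedWord.toWord_mk {L : List (α × Bool)} (h : RedWord L) :
    (FreeGroup.mk L).toWord = L := by
  rw [FreeGroup.toWord_mk, h.reduce_eq]

theorem RedWord.invRev {L : List (α × Bool)} (h : RedWord L) : RedWord (FreeGroup.invRev L) := by
  apply redWord_of_reduce_eq
  rw [FreeGroup.reduce_invRev, h.reduce_eq]
def CycRed (L : List (α × Bool)) : Prop :=
  RedWord L ∧ ∀ p ∈ L.getLast?, ∀ q ∈ L.head?, ¬(p.1 = q.1 ∧ p.2 = !q.2)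

theorem invRev_cons (x : α × Bool) (L : List (α × Bool)) :
    FreeGroup.invRev (x :: L) = FreeGroup.invRev L ++ [(x.1, !x.2)] := by
  simp [FreeGroup.invRev]

theorem cyc_decomp : ∀ (n : ℕ) (L : List (α × Bool)), L.length = n → RedWord L →
    ∃ U T, L = U ++ T ++ FreeGroup.invRev U ∧ CycRed T := by
  intro n
  induction n using Nat.strong_induction_on with
  | _ n ih =>
    intro L hlen hred
    by_cases hcr : ∀ p ∈ L.getLast?, ∀ q ∈ L.head?, ¬(p.1 = q.1 ∧ p.2 = !q.2)
    · exact ⟨[], L, by simp [FreeGroup.invRev], hred, hcr⟩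
    · push_neg at hcr
      obtain ⟨p, hp, q, hq, hpq1, hpq2⟩ := hcr
      -- L = q :: t
      cases L with
      | nil => simp at hq
      | cons q' t =>
        obtain rfl : q' = q := by simpa using hq
        cases t with
        | nil =>
          obtain rfl : q' = p := by simpa using hp
          simp at hpq2
        | cons y u =>
          have htne : (y :: u) ≠ [] := by simp
          have hlast : (y :: u).getLast? = some p := by
            rw [← hp, List.getLast?_cons_cons]
          have hpl : p = (y :: u).getLast htne := by
            rw [List.getLast?_eq_getLast htne] at hlast
            exact (Option.some.injEq _ _ ▸ hlast).symm
          have hsplit : (y :: u).dropLast ++ [p] = y :: u := by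
            rw [hpl]; exact List.dropLast_append_getLast htne
          set M := (y :: u).dropLast with hM
          have hLeq : q' :: y :: u = [q'] ++ M ++ [p] := by
            simp [hsplit]
          have hMred : RedWord M := hred.infix ⟨[q'], [p], by simp [hLeq]⟩
          have hlenM : M.length < n := by
            have h1 := congrArg List.length hLeq
            simp only [List.length_cons, List.length_append, List.length_singleton] at h1 hlen
            omega
          obtain ⟨U', T, hMeq, hT⟩ := ih M.length hlenM M rfl hMred
          refine ⟨q' :: U', T, ?_, hT⟩
          have hpq : p = (q'.1, !q'.2) := by
            rw [Prod.ext_iff]; exact ⟨hpq1, hpq2⟩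
          rw [_root_.invRev_cons, ← hpq, hLeq, hMeq]
          simp
theorem redWord_flatten_replicate {T : List (α × Bool)} (hT : CycRed T) (n : ℕ) :
    RedWord (List.replicate n T).flatten := by
  rcases eq_or_ne T [] with rfl | hne
  · simp [RedWord, List.Chain']
  · have hmem : [] ∉ List.replicate n T := by
      intro h
      exact hne (List.eq_of_mem_replicate h).symm
    rw [RedWord, List.Chain', List.isChain_flatten hmem]
    constructor
    · intro l hl
      rw [List.eq_of_mem_replicate hl]
      exact hT.1
    · apply List.isChain_replicate_of_rel
      exact hT.2

theorem head?_flatten_replicate {T : List (α × Bool)} (hne : T ≠ []) {n : ℕ} (hn : n ≠ 0) :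
    (List.replicate n T).flatten.head? = T.head? := by
  obtain ⟨m, rfl⟩ := Nat.exists_eq_succ_of_ne_zero hn
  rw [List.replicate_succ, List.flatten_cons, List.head?_append_of_ne_nil _ hne]

theorem getLast?_flatten_replicate {T : List (α × Bool)} (hne : T ≠ []) {n : ℕ} (hn : n ≠ 0) :
    (List.replicate n T).flatten.getLast? = T.getLast? := by
  obtain ⟨m, rfl⟩ := Nat.exists_eq_succ_of_ne_zero hn
  rw [List.replicate_succ', List.flatten_append]
  simp only [List.flatten_cons, List.flatten_nil, List.append_nil]
  rw [List.getLast?_append_of_ne_nil _ hne]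

theorem flatten_replicate_ne_nil {T : List (α × Bool)} (hne : T ≠ []) {n : ℕ} (hn : n ≠ 0) :
    (List.replicate n T).flatten ≠ [] := by
  intro h
  have := head?_flatten_replicate hne hn
  rw [h] at this
  cases T with
  | nil => exact hne rfl
  | cons a t => simp at this

theorem redWord_Z {U T : List (α × Bool)} (h : RedWord (U ++ T ++ FreeGroup.invRev U))
    (hT : CycRed T) (hTne : T ≠ []) {n : ℕ} (hn : n ≠ 0) :
    RedWord (U ++ (List.replicate n T).flatten ++ FreeGroup.invRev U) := by
  have h' : RedWord (U ++ (T ++ FreeGroup.invRev U)) := by rwa [← List.append_assoc]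
  obtain ⟨hU, hTV, hjUT⟩ := List.isChain_append.1 h'
  obtain ⟨hTr, hV, hjTV⟩ := List.isChain_append.1 hTV
  have hF : RedWord (List.replicate n T).flatten := redWord_flatten_replicate hT n
  have hFne := flatten_replicate_ne_nil hTne hn
  rw [RedWord, List.append_assoc, List.Chain', List.isChain_append]
  refine ⟨hU, ?_, ?_⟩
  · rw [List.isChain_append]
    refine ⟨hF, hV, ?_⟩
    rw [getLast?_flatten_replicate hTne hn]
    exact hjTV
  · intro x hx y hy
    rw [List.head?_append_of_ne_nil _ hFne, head?_flatten_replicate hTne hn] at hy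
    apply hjUT x hx
    rwa [List.head?_append_of_ne_nil _ hTne]

theorem mk_pow (L : List (α × Bool)) (n : ℕ) :
    FreeGroup.mk L ^ n = FreeGroup.mk (List.replicate n L).flatten := by
  induction n with
  | zero => simp [FreeGroup.one_eq_mk]
  | succ m ih =>
    rw [pow_succ', ih, List.replicate_succ, List.flatten_cons, FreeGroup.mul_mk]

theorem prod_map_mk (Ls : List (List (α × Bool))) :
    (Ls.map FreeGroup.mk).prod = FreeGroup.mk Ls.flatten := by
  induction Ls with
  | nil => simp [FreeGroup.one_eq_mk]
  | cons l ls ih => simp [ih, FreeGroup.mul_mk]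

theorem countP_flatten_replicate (p : α × Bool → Bool) (T : List (α × Bool)) (n : ℕ) :
    ((List.replicate n T).flatten).countP p = n * T.countP p := by
  rw [List.countP_flatten, List.map_replicate, List.sum_replicate, smul_eq_mul]
end GenericWords

/-- The generator `aᵢ` of the free group of rank `2g`. -/
def genA (g : ℕ) (i : Fin g) : FreeGroup (Fin g ⊕ Fin g) := FreeGroup.of (Sum.inl i)

/-- The generator `bᵢ` of the free group of rank `2g`. -/
def genB (g : ℕ) (i : Fin g) : FreeGroup (Fin g ⊕ Fin g) := FreeGroup.of (Sum.inr i)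

open scoped commutatorElement

/-- The surface relator `c = [a₁,b₁]⋯[a_g,b_g]`. -/
def surfaceRel (g : ℕ) : FreeGroup (Fin g ⊕ Fin g) :=
  (List.ofFn fun i : Fin g => ⁅genA g i, genB g i⁆).prod

/-- The block of four letters coming from the `i`-th commutator. -/
def surfBlock (g : ℕ) (i : Fin g) : List ((Fin g ⊕ Fin g) × Bool) :=
  [(Sum.inl i, true), (Sum.inr i, true), (Sum.inl i, false), (Sum.inr i, false)]

/-- The word of the surface relator. -/
def surfWord (g : ℕ) : List ((Fin g ⊕ Fin g) × Bool) :=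
  (List.ofFn (surfBlock g)).flatten

theorem surfaceRel_eq_mk (g : ℕ) : surfaceRel g = FreeGroup.mk (surfWord g) := by
  have hblk : ∀ i : Fin g, ⁅genA g i, genB g i⁆ = FreeGroup.mk (surfBlock g i) := by
    intro i
    rw [commutatorElement_def]
    show FreeGroup.mk [(Sum.inl i, true)] * FreeGroup.mk [(Sum.inr i, true)] *
      (FreeGroup.mk [(Sum.inl i, true)])⁻¹ * (FreeGroup.mk [(Sum.inr i, true)])⁻¹ = _
    simp [FreeGroup.mul_mk, FreeGroup.inv_mk, FreeGroup.invRev, surfBlock]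
  simp only [surfaceRel, hblk, surfWord, ← prod_map_mk, List.map_ofFn, Function.comp_def]

theorem redWord_surfWord (g : ℕ) : RedWord (surfWord g) := by
  have hmem : [] ∉ List.ofFn (surfBlock g) := by
    intro h
    rw [List.mem_ofFn] at h
    obtain ⟨i, hi⟩ := h
    simp [surfBlock] at hi
  rw [RedWord, surfWord, List.Chain', List.isChain_flatten hmem]
  constructor
  · intro l hl
    rw [List.mem_ofFn] at hl
    obtain ⟨i, rfl⟩ := hl
    simp [surfBlock, List.isChain_cons_cons]
  · rw [List.isChain_iff_getElem]
    intro i hi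
    simp only [List.get_eq_getElem, List.getElem_ofFn]
    simp [surfBlock]

theorem toWord_surfaceRel (g : ℕ) : (surfaceRel g).toWord = surfWord g := by
  rw [surfaceRel_eq_mk]
  exact (redWord_surfWord g).toWord_mk
theorem surfWord_head? {g : ℕ} (hg : 1 ≤ g) :
    ∃ (i : Fin g) (b : Bool), (surfWord g).head? = some (Sum.inl i, b) := by
  obtain ⟨g', rfl⟩ : ∃ g', g = g' + 1 := ⟨g - 1, by omega⟩
  rw [surfWord, List.ofFn_succ, List.flatten_cons,
    List.head?_append_of_ne_nil _ (by simp [surfBlock])]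
  exact ⟨0, true, rfl⟩

theorem surfWord_getLast? {g : ℕ} (hg : 1 ≤ g) :
    ∃ (j : Fin g) (b : Bool), (surfWord g).getLast? = some (Sum.inr j, b) := by
  obtain ⟨g', rfl⟩ : ∃ g', g = g' + 1 := ⟨g - 1, by omega⟩
  rw [surfWord, List.ofFn_succ', List.concat_eq_append, List.flatten_append]
  rw [List.getLast?_append_of_ne_nil _ (by simp [surfBlock])]
  refine ⟨Fin.last g', false, ?_⟩
  simp [surfBlock]

theorem surfWord_ne_nil {g : ℕ} (hg : 1 ≤ g) : surfWord g ≠ [] := by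
  obtain ⟨i, b, hb⟩ := surfWord_head? hg
  intro h
  rw [h] at hb
  simp at hb

theorem surfaceRel_ne_one {g : ℕ} (hg : 1 ≤ g) : surfaceRel g ≠ 1 := by
  intro h
  have := toWord_surfaceRel g
  rw [h, FreeGroup.toWord_one] at this
  exact surfWord_ne_nil hg this.symm

theorem count_surfWord {g : ℕ} (hg : 1 ≤ g) :
    (surfWord g).countP (fun x => decide (x = (Sum.inl (⟨0, hg⟩ : Fin g), true))) = 1 := by
  set p : (Fin g ⊕ Fin g) × Bool → Bool :=
    fun x => decide (x = (Sum.inl (⟨0, hg⟩ : Fin g), true)) with hp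
  have hcb : ∀ i : Fin g, (surfBlock g i).countP p = if i = ⟨0, hg⟩ then 1 else 0 := by
    intro i
    rcases eq_or_ne i ⟨0, hg⟩ with rfl | hne
    · simp [surfBlock, hp, List.countP_cons]
    · simp [surfBlock, hp, List.countP_cons, Prod.ext_iff, hne]
  rw [surfWord, List.countP_flatten, List.map_ofFn]
  have : ((List.ofFn ((List.countP p) ∘ surfBlock g)).sum : ℕ)
      = ∑ i : Fin g, if i = ⟨0, hg⟩ then 1 else 0 := by
    rw [List.sum_ofFn]
    exact Finset.sum_congr rfl fun i _ => hcb i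
  rw [this]
  simp
theorem surfaceRel_not_proper_pow {g : ℕ} (hg : 1 ≤ g) (z : FreeGroup (Fin g ⊕ Fin g))
    (k : ℤ) (h : z ^ k = surfaceRel g) : k = 1 ∨ k = -1 := by
  by_contra hk
  push_neg at hk
  have key : ∀ (y : FreeGroup (Fin g ⊕ Fin g)) (n : ℕ), 2 ≤ n → y ^ n ≠ surfaceRel g := by
    intro y n hn hyn
    obtain ⟨U, T, hdecomp, hT⟩ := cyc_decomp (y.toWord.length) y.toWord rfl (redWord_toWord y)
    have hy : y = FreeGroup.mk U * FreeGroup.mk T * (FreeGroup.mk U)⁻¹ := by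
      rw [FreeGroup.inv_mk, FreeGroup.mul_mk, FreeGroup.mul_mk, ← hdecomp, FreeGroup.mk_toWord]
    have hTne : T ≠ [] := by
      rintro rfl
      have hy1 : y = 1 := by
        rw [hy, ← FreeGroup.one_eq_mk]
        group
      rw [hy1, one_pow] at hyn
      exact surfaceRel_ne_one hg hyn.symm
    have hn0 : n ≠ 0 := by omega
    have hZ : y ^ n = FreeGroup.mk (U ++ (List.replicate n T).flatten ++ FreeGroup.invRev U) := by
      rw [hy, conj_pow, mk_pow, FreeGroup.mul_mk, FreeGroup.inv_mk, FreeGroup.mul_mk]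
    have hredZ : RedWord (U ++ (List.replicate n T).flatten ++ FreeGroup.invRev U) := by
      apply redWord_Z _ hT hTne hn0
      rw [← hdecomp]
      exact redWord_toWord y
    have hZW : surfWord g = U ++ (List.replicate n T).flatten ++ FreeGroup.invRev U := by
      have h1 := hredZ.toWord_mk
      rwa [← hZ, hyn, toWord_surfaceRel] at h1
    rcases eq_or_ne U [] with rfl | hUne
    · rw [FreeGroup.invRev_empty, List.nil_append, List.append_nil] at hZW
      have hc := count_surfWord hg
      rw [hZW, countP_flatten_replicate] at hc
      have hdvd : n ∣ 1 := ⟨_, hc.symm⟩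
      have := Nat.le_of_dvd one_pos hdvd
      omega
    · obtain ⟨i, b, hhead⟩ := surfWord_head? hg
      obtain ⟨j, b', hlast⟩ := surfWord_getLast? hg
      cases U with
      | nil => exact hUne rfl
      | cons u0 us =>
        have hh : (surfWord g).head? = some u0 := by
          rw [hZW, List.cons_append, List.cons_append, List.head?_cons]
        have hIU : FreeGroup.invRev (u0 :: us) ≠ [] := by
          rw [_root_.invRev_cons]
          simp
        have hl : (surfWord g).getLast? = some (u0.1, !u0.2) := by
          rw [hZW, List.getLast?_append_of_ne_nil _ hIU, _root_.invRev_cons,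
            List.getLast?_append_of_ne_nil _ (by simp : [(u0.1, !u0.2)] ≠ [])]
          rfl
        rw [hhead] at hh
        rw [hlast] at hl
        have h1 : u0.1 = Sum.inl i := by
          have := (Option.some.injEq _ _ ▸ hh : (Sum.inl i, b) = u0)
          rw [← this]
        have h2 : u0.1 = Sum.inr j := by
          have := (Option.some.injEq _ _ ▸ hl : (Sum.inr j, b') = (u0.1, !u0.2))
          rw [Prod.ext_iff] at this
          exact this.1.symm
        rw [h1] at h2
        simp at h2
  have hk0 : k ≠ 0 := by
    rintro rfl
    rw [zpow_zero] at h
    exact surfaceRel_ne_one hg h.symm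
  have hcase : 2 ≤ k ∨ k ≤ -2 := by omega
  rcases hcase with h2 | h2
  · refine key z k.toNat (by omega) ?_
    rwa [← zpow_natCast, Int.toNat_of_nonneg (by omega)]
  · refine key z⁻¹ (-k).toNat (by omega) ?_
    have he : (z⁻¹) ^ (((-k).toNat : ℕ)) = z ^ k := by
      rw [← zpow_natCast, Int.toNat_of_nonneg (by omega), inv_zpow, ← zpow_neg, neg_neg]
    rw [he, h]
theorem freeGroup_comm_exists_zpow {β : Type*} (h : ∀ x y : FreeGroup β, Commute x y) :
    ∃ z : FreeGroup β, ∀ x : FreeGroup β, ∃ m : ℤ, x = z ^ m := by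
  classical
  have hred2 : ∀ (x y : β), RedWord [(x, true), (y, true)] := by
    intro x y
    refine List.isChain_cons_cons.2 ⟨?_, List.isChain_singleton _⟩
    simp
  have hsub : ∀ a b : β, a = b := by
    intro a b
    have hc : FreeGroup.of a * FreeGroup.of b = FreeGroup.of b * FreeGroup.of a := h _ _
    have h1 : FreeGroup.of a * FreeGroup.of b = FreeGroup.mk [(a, true), (b, true)] := by
      rw [show FreeGroup.of a = FreeGroup.mk [(a, true)] from rfl,
        show FreeGroup.of b = FreeGroup.mk [(b, true)] from rfl, FreeGroup.mul_mk]
      rfl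
    have h2 : FreeGroup.of b * FreeGroup.of a = FreeGroup.mk [(b, true), (a, true)] := by
      rw [show FreeGroup.of a = FreeGroup.mk [(a, true)] from rfl,
        show FreeGroup.of b = FreeGroup.mk [(b, true)] from rfl, FreeGroup.mul_mk]
      rfl
    have h3 : ([(a, true), (b, true)] : List (β × Bool)) = [(b, true), (a, true)] := by
      have e1 := (hred2 a b).toWord_mk
      have e2 := (hred2 b a).toWord_mk
      rw [← e1, ← e2, ← h1, ← h2, hc]
    simp only [List.cons.injEq, Prod.mk.injEq] at h3
    exact h3.1.1
  haveI hss : Subsingleton β := ⟨hsub⟩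
  by_cases hne : Nonempty β
  · obtain ⟨a⟩ := hne
    refine ⟨FreeGroup.of a, fun x => ?_⟩
    have hgen : ∀ L : List (β × Bool), ∃ m : ℤ, FreeGroup.mk L = (FreeGroup.of a) ^ m := by
      intro L
      induction L with
      | nil => exact ⟨0, by rw [zpow_zero, ← FreeGroup.one_eq_mk]⟩
      | cons hd tl ih =>
        obtain ⟨m, hm⟩ := ih
        obtain ⟨x, b⟩ := hd
        have hsplit : FreeGroup.mk ((x, b) :: tl)
            = FreeGroup.mk [(x, b)] * FreeGroup.mk tl := by
          rw [FreeGroup.mul_mk]; rfl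
        have hx : x = a := hsub x a
        subst hx
        cases b
        · refine ⟨-1 + m, ?_⟩
          rw [hsplit, hm, zpow_add, zpow_neg_one]
          congr 1
        · refine ⟨1 + m, ?_⟩
          rw [hsplit, hm, zpow_add, zpow_one]
          rfl
    obtain ⟨m, hm⟩ := hgen x.toWord
    rw [FreeGroup.mk_toWord] at hm
    exact ⟨m, hm⟩
  · refine ⟨1, fun x => ⟨0, ?_⟩⟩
    rw [zpow_zero]
    have hnil : x.toWord = [] := by
      cases hL : x.toWord with
      | nil => rfl
      | cons hd tl => exact absurd ⟨hd.1⟩ hne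
    rw [← FreeGroup.mk_toWord (x := x), hnil, ← FreeGroup.one_eq_mk]

theorem closure_pair_comm {G : Type*} [Group G] {c w : G} (h : Commute c w) (x y : G)
    (hx : x ∈ Subgroup.closure {c, w}) (hy : y ∈ Subgroup.closure {c, w}) : Commute x y := by
  have key : ∀ u, u ∈ Subgroup.closure {c, w} → Commute c u ∧ Commute w u := by
    intro u hu
    induction hu using Subgroup.closure_induction with
    | mem z hz =>
      simp only [Set.mem_insert_iff, Set.mem_singleton_iff] at hz
      rcases hz with rfl | rfl
      · exact ⟨Commute.refl _, h.symm⟩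
      · exact ⟨h, Commute.refl _⟩
    | one => exact ⟨Commute.one_right c, Commute.one_right w⟩
    | mul a b _ _ pa pb => exact ⟨pa.1.mul_right pb.1, pa.2.mul_right pb.2⟩
    | inv a _ pa => exact ⟨pa.1.inv_right, pa.2.inv_right⟩
  induction hy using Subgroup.closure_induction with
  | mem z hz =>
    simp only [Set.mem_insert_iff, Set.mem_singleton_iff] at hz
    rcases hz with rfl | rfl
    · exact ((key x hx).1).symm
    · exact ((key x hx).2).symm
  | one => exact Commute.one_right x
  | mul a b _ _ pa pb => exact pa.mul_right pb
  | inv a _ pa => exact pa.inv_right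
/-- The centralizer of `c = [a₁,b₁]⋯[a_g,b_g]` in the free group `F_{2g}` (`g ≥ 1`)
is the cyclic subgroup generated by `c`. -/
theorem centralizer_surfaceRel (g : ℕ) (hg : 1 ≤ g) :
    Subgroup.centralizer {surfaceRel g} = Subgroup.zpowers (surfaceRel g) := by
  apply le_antisymm
  · intro w hw
    set c := surfaceRel g with hc
    have hcomm : Commute c w := Subgroup.mem_centralizer_iff.1 hw c (Set.mem_singleton c)
    set H := Subgroup.closure ({c, w} : Set (FreeGroup (Fin g ⊕ Fin g))) with hH
    obtain ⟨ι, ⟨bas⟩⟩ := (inferInstance : IsFreeGroup H).nonempty_basis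
    set e := bas.repr with he
    have hHcomm : ∀ x y : H, Commute x y := by
      intro x y
      have hcm := closure_pair_comm hcomm x.1 y.1 x.2 y.2
      exact Subtype.ext (by simpa using hcm.eq)
    have hFcomm : ∀ u v : FreeGroup ι, Commute u v := by
      intro u v
      have := (hHcomm (e.symm u) (e.symm v)).map e.toMonoidHom
      simpa using this
    obtain ⟨z, hz⟩ := freeGroup_comm_exists_zpow hFcomm
    set ζ : H := e.symm z with hζdef
    have hζ : ∀ x : H, ∃ m : ℤ, x = ζ ^ m := by
      intro x
      obtain ⟨m, hm⟩ := hz (e x)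
      refine ⟨m, ?_⟩
      have := congrArg e.symm hm
      rwa [e.symm_apply_apply, map_zpow] at this
    have hcH : c ∈ H := Subgroup.subset_closure (by simp)
    have hwH : w ∈ H := Subgroup.subset_closure (by simp)
    obtain ⟨m, hm⟩ := hζ ⟨c, hcH⟩
    obtain ⟨k, hk⟩ := hζ ⟨w, hwH⟩
    have hmc : (ζ : FreeGroup (Fin g ⊕ Fin g)) ^ m = c := by
      have := congrArg (Subtype.val) hm
      simp only [SubgroupClass.coe_zpow] at this
      exact this.symm
    have hkc : w = (ζ : FreeGroup (Fin g ⊕ Fin g)) ^ k := by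
      have := congrArg (Subtype.val) hk
      simpa only [SubgroupClass.coe_zpow] using this
    rw [Subgroup.mem_zpowers_iff]
    rcases surfaceRel_not_proper_pow hg (ζ : FreeGroup (Fin g ⊕ Fin g)) m hmc with rfl | rfl
    · rw [zpow_one] at hmc
      exact ⟨k, by rw [hkc, hmc]⟩
    · have hinv : (ζ : FreeGroup (Fin g ⊕ Fin g)) = c⁻¹ := by
        rw [← hmc, zpow_neg_one, inv_inv]
      exact ⟨-k, by rw [hkc, hinv, inv_zpow, zpow_neg]⟩
  · rw [Subgroup.zpowers_le]
    rw [Subgroup.mem_centralizer_iff]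
    intro h hh
    rw [Set.mem_singleton_iff] at hh
    rw [hh]
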